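/- For every n ≥ 2, the minimal counterexample size for generalized edge reconstruction satisfies k_n ≤ 2^{⌊n/3⌋}. -/

import Mathlib

open SimpleGraph

/-- A finite simple graph, packaged with its (finite) vertex type. -/
structure FGraph : Type 1 where
  V : Type
  [finV : Finite V]
  graph : SimpleGraph V

attribute [instance] FGraph.finV

namespace FGraph

/-- Two finite graphs are isomorphic if there is a graph isomorphism between them. -/
def IsIsoTo (G H : FGraph) : Prop := Nonempty (G.graph ≃g H.graph)

instance setoid : Setoid FGraph where
  r := IsIsoTo
  iseqv := ⟨fun G => ⟨RelIso.refl G.graph.Adj⟩, fun ⟨e⟩ => ⟨e.symm⟩, fun ⟨e⟩ ⟨f⟩ => ⟨e.trans f⟩⟩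

end FGraph

/-- Isomorphism classes of finite simple graphs. -/
def GraphClass : Type 1 := Quotient FGraph.setoid

namespace FGraph

/-- The isomorphism class of a finite graph. -/
def cls (G : FGraph) : GraphClass := Quotient.mk _ G

/-- The number of edges of a finite graph. -/
noncomputable def edgeCount (G : FGraph) : ℕ := G.graph.edgeSet.ncard

/-- The edge-deleted subgraph `G - e`: same vertices, with the edge `e` removed. -/
def deleteEdge (G : FGraph) (e : Sym2 G.V) : FGraph :=
  { V := G.V, graph := G.graph.deleteEdges {e} }

/-- The multiset of edge-deleted subgraphs of `G` (one for each edge), as graphs. -/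
noncomputable def deckGraphs (G : FGraph) : Multiset FGraph :=
  (G.graph.edgeSet.toFinite.toFinset.val).map fun e => G.deleteEdge e

/-- The edge deck of `G` : the multiset of isomorphism classes of the edge-deleted
subgraphs `G - e`, one for each edge `e` of `G`. -/
noncomputable def edgeDeck (G : FGraph) : Multiset GraphClass :=
  G.deckGraphs.map cls

lemma exists_of_mem_edgeDeck {G : FGraph} {c : GraphClass} (hc : c ∈ G.edgeDeck) :
    ∃ H : FGraph, H.cls = c ∧ H.edgeCount = G.edgeCount - 1 := by
  classical
  rw [edgeDeck, deckGraphs, Multiset.map_map] at hc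
  obtain ⟨e, he, rfl⟩ := Multiset.mem_map.mp hc
  refine ⟨G.deleteEdge e, rfl, ?_⟩
  have he' : e ∈ G.graph.edgeSet := by
    simpa using (Set.Finite.mem_toFinset _).mp he
  simp only [edgeCount, deleteEdge, SimpleGraph.edgeSet_deleteEdges]
  exact Set.ncard_sdiff_singleton_of_mem he'

/-- The disjoint union of two finite graphs. -/
def disjUnion (G H : FGraph) : FGraph :=
  { V := G.V ⊕ H.V, graph := G.graph ⊕g H.graph }

end FGraph

/-- `𝒢 n` is the set of isomorphism classes of graphs with exactly `n` edges. -/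
def GClass (n : ℕ) : Type 1 :=
  {c : GraphClass // ∃ G : FGraph, G.cls = c ∧ G.edgeCount = n}

/-- Given a graph `G` with `n` edges, sum a function `f` over the edge deck of `G`,
regarded as a multiset of isomorphism classes of graphs with `n - 1` edges. -/
noncomputable def FGraph.edgeDeckSum (n : ℕ) (G : FGraph) (hG : G.edgeCount = n)
    {β : Type*} [AddCommMonoid β] (f : GClass (n - 1) → β) : β :=
  (G.edgeDeck.attach.map fun c => f ⟨c.1, by
    obtain ⟨H, h1, h2⟩ := FGraph.exists_of_mem_edgeDeck c.2
    exact ⟨H, h1, by rw [h2, hG]⟩⟩).sum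

/-- The subgroup of relations defining `K₀(Γ_{n,n-1})`: for every graph `G` with `n`
edges, `[G] = Σ_{C ∈ ED(G)} [C]`. -/
def K0Rel (n : ℕ) : AddSubgroup (FreeAbelianGroup (GClass n ⊕ GClass (n - 1))) :=
  AddSubgroup.closure
    {x | ∃ (G : FGraph) (hG : G.edgeCount = n),
      x = FreeAbelianGroup.of (Sum.inl ⟨G.cls, G, rfl, hG⟩)
        - G.edgeDeckSum n hG (fun c => FreeAbelianGroup.of (Sum.inr c))}

/-- `K₀(Γ_{n,n-1})`: the free abelian group on `𝒢 n ⊔ 𝒢 (n-1)` modulo the edge-deck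
relations. -/
abbrev K0Gamma (n : ℕ) : Type 1 :=
  FreeAbelianGroup (GClass n ⊕ GClass (n - 1)) ⧸ K0Rel n

/-- The map `ι_n : 𝒢 n → K₀(Γ_{n,n-1})` sending a class to its image in the quotient. -/
noncomputable def iotaCls (n : ℕ) (c : GClass n) : K0Gamma n :=
  QuotientAddGroup.mk (FreeAbelianGroup.of (Sum.inl c))

/-- Generalized edge reconstruction fails for `n`-edge graphs with `k` pieces: there are
two distinct multisets of `k` isomorphism classes of graphs with exactly `n` edges whose
total edge decks agree. -/
def GERFails (n k : ℕ) : Prop :=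
  ∃ M M' : Multiset FGraph,
    Multiset.card M = k ∧ Multiset.card M' = k ∧
    (∀ G ∈ M, G.edgeCount = n) ∧ (∀ G ∈ M', G.edgeCount = n) ∧
    M.map FGraph.cls ≠ M'.map FGraph.cls ∧
    (M.map FGraph.edgeDeck).sum = (M'.map FGraph.edgeDeck).sum

/-- `kmin n` is the least `k ≥ 1` for which generalized edge reconstruction fails for
`n`-edge graphs. -/
noncomputable def kmin (n : ℕ) : ℕ := sInf {k | 1 ≤ k ∧ GERFails n k}

/-- The graph `2K₂`: four vertices, two disjoint edges. -/
def twoK2 : FGraph :=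
  { V := Fin 4, graph := SimpleGraph.fromEdgeSet {s(0, 1), s(2, 3)} }

/-- The graph `P₃ ⊔ K₁`: a two-edge path together with an isolated vertex. -/
def p3K1 : FGraph :=
  { V := Fin 4, graph := SimpleGraph.fromEdgeSet {s(0, 1), s(1, 2)} }

/-- The graph `K₃ ⊔ K₁`: a triangle together with an isolated vertex. -/
def k3K1 : FGraph :=
  { V := Fin 4, graph := SimpleGraph.fromEdgeSet {s(0, 1), s(1, 2), s(0, 2)} }

/-- The star `K_{1,3}`: a center vertex adjacent to three leaves. -/
def k13 : FGraph :=
  { V := Fin 4, graph := SimpleGraph.fromEdgeSet {s(0, 1), s(0, 2), s(0, 3)} }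

open SimpleGraph FGraph

attribute [reducible] FGraph.deleteEdge FGraph.disjUnion twoK2 p3K1 k3K1 k13

namespace FGraph

/-- isomorphism of disjoint unions from isomorphisms of pieces -/
def Iso.disjUnion {G G' H H' : FGraph} (e : G.graph ≃g G'.graph) (f : H.graph ≃g H'.graph) :
    (G.disjUnion H).graph ≃g (G'.disjUnion H').graph :=
  ⟨Equiv.sumCongr e.toEquiv f.toEquiv, by
    intro u v
    cases u <;> cases v <;> simp [FGraph.disjUnion, e.map_adj_iff, f.map_adj_iff]⟩

lemma disjUnion_congr {G G' H H' : FGraph} (hG : G ≈ G') (hH : H ≈ H') :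
    (G.disjUnion H) ≈ (G'.disjUnion H') := by
  obtain ⟨e⟩ := hG; obtain ⟨f⟩ := hH; exact ⟨Iso.disjUnion e f⟩

lemma edgeSet_disjUnion (G H : FGraph) :
    (G.disjUnion H).graph.edgeSet =
      Sym2.map Sum.inl '' G.graph.edgeSet ∪ Sym2.map Sum.inr '' H.graph.edgeSet := by
  ext e
  induction e using Sym2.ind with
  | _ x y =>
    constructor
    · intro h
      rw [SimpleGraph.mem_edgeSet] at h
      cases x <;> cases y <;> simp only [FGraph.disjUnion, SimpleGraph.sum_adj] at h
      · exact Or.inl ⟨s(_, _), h, Sym2.map_pair_eq _ _ _⟩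
      · exact Or.inr ⟨s(_, _), h, Sym2.map_pair_eq _ _ _⟩
    · rintro (⟨e', he', h⟩ | ⟨e', he', h⟩) <;>
      · induction e' using Sym2.ind with
        | _ a b =>
          rw [Sym2.map_pair_eq] at h
          rw [← h, SimpleGraph.mem_edgeSet]
          simpa [FGraph.disjUnion] using he'

end FGraph
namespace FGraph

lemma cls_deleteEdge_inl (G H : FGraph) (e : Sym2 G.V) :
    cls ((G.disjUnion H).deleteEdge (Sym2.map Sum.inl e)) = cls ((G.deleteEdge e).disjUnion H) :=
  Quotient.sound ⟨⟨Equiv.refl _, by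
    intro u v
    induction e using Sym2.ind with
    | _ x y =>
      cases u <;> cases v <;>
        simp [FGraph.deleteEdge, FGraph.disjUnion, Sym2.map_pair_eq, Sym2.eq_iff]⟩⟩

lemma cls_deleteEdge_inr (G H : FGraph) (e : Sym2 H.V) :
    cls ((G.disjUnion H).deleteEdge (Sym2.map Sum.inr e)) = cls (G.disjUnion (H.deleteEdge e)) :=
  Quotient.sound ⟨⟨Equiv.refl _, by
    intro u v
    induction e using Sym2.ind with
    | _ x y =>
      cases u <;> cases v <;>
        simp [FGraph.deleteEdge, FGraph.disjUnion, Sym2.map_pair_eq, Sym2.eq_iff]⟩⟩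

end FGraph
namespace FGraph

noncomputable def edgeFinset (G : FGraph) : Finset (Sym2 G.V) :=
  G.graph.edgeSet.toFinite.toFinset

lemma mem_edgeFinset {G : FGraph} {e : Sym2 G.V} : e ∈ G.edgeFinset ↔ e ∈ G.graph.edgeSet :=
  Set.Finite.mem_toFinset _

lemma deckGraphs_eq (G : FGraph) : G.deckGraphs = G.edgeFinset.val.map G.deleteEdge := rfl

def sym2InlEmb (G H : FGraph) : Sym2 G.V ↪ Sym2 (G.disjUnion H).V :=
  ⟨Sym2.map Sum.inl, Sym2.map.injective Sum.inl_injective⟩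

def sym2InrEmb (G H : FGraph) : Sym2 H.V ↪ Sym2 (G.disjUnion H).V :=
  ⟨Sym2.map Sum.inr, Sym2.map.injective Sum.inr_injective⟩

lemma disjoint_inl_inr (G H : FGraph) :
    Disjoint (G.edgeFinset.map (sym2InlEmb G H)) (H.edgeFinset.map (sym2InrEmb G H)) := by
  rw [Finset.disjoint_left]
  rintro a ha hb
  obtain ⟨x, -, rfl⟩ := Finset.mem_map.mp ha
  obtain ⟨y, -, hy⟩ := Finset.mem_map.mp hb
  induction x using Sym2.ind with
  | _ a b =>
    induction y using Sym2.ind with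
    | _ c d =>
      simp [sym2InlEmb, sym2InrEmb, Sym2.map_pair_eq, Sym2.eq_iff] at hy

lemma edgeFinset_disjUnion (G H : FGraph) :
    (G.disjUnion H).edgeFinset
      = (G.edgeFinset.map (sym2InlEmb G H)).disjUnion (H.edgeFinset.map (sym2InrEmb G H))
        (disjoint_inl_inr G H) := by
  ext e
  refine mem_edgeFinset.trans ?_
  rw [edgeSet_disjUnion]
  simp only [mem_edgeFinset, edgeSet_disjUnion, Set.mem_union, Set.mem_image,
    Finset.mem_disjUnion, Finset.mem_map, sym2InlEmb, sym2InrEmb, Function.Embedding.coeFn_mk]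


lemma edgeDeck_disjUnion (G H : FGraph) :
    (G.disjUnion H).edgeDeck
      = G.deckGraphs.map (fun X => cls (X.disjUnion H))
        + H.deckGraphs.map (fun Y => cls (G.disjUnion Y)) := by
  have hval : (G.disjUnion H).edgeFinset.val
      = G.edgeFinset.val.map (Sym2.map Sum.inl) + H.edgeFinset.val.map (Sym2.map Sum.inr) := by
    rw [edgeFinset_disjUnion]
    rfl
  rw [edgeDeck, deckGraphs_eq, hval]
  simp only [Multiset.map_add, Multiset.map_map, Function.comp]
  congr 1
  · rw [deckGraphs_eq, Multiset.map_map]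
    exact Multiset.map_congr rfl fun e _ => cls_deleteEdge_inl G H e
  · rw [deckGraphs_eq, Multiset.map_map]
    exact Multiset.map_congr rfl fun e _ => cls_deleteEdge_inr G H e

end FGraph
namespace FGraph

lemma edgeCount_eq_card (G : FGraph) : G.edgeCount = G.edgeFinset.card :=
  Set.ncard_eq_toFinset_card _ _

lemma edgeCount_disjUnion (G H : FGraph) :
    (G.disjUnion H).edgeCount = G.edgeCount + H.edgeCount := by
  rw [edgeCount_eq_card, edgeCount_eq_card, edgeCount_eq_card, edgeFinset_disjUnion,
    Finset.card_disjUnion, Finset.card_map, Finset.card_map]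

/-- `· ⊔ H` on isomorphism classes. -/
noncomputable def clsUnionRight (H : FGraph) : GraphClass → GraphClass :=
  Quotient.map (fun X => X.disjUnion H) fun _ _ h => disjUnion_congr h (Setoid.refl H)

/-- `G ⊔ ·` on isomorphism classes. -/
noncomputable def clsUnionLeft (G : FGraph) : GraphClass → GraphClass :=
  Quotient.map (fun Y => G.disjUnion Y) fun _ _ h => disjUnion_congr (Setoid.refl G) h

lemma clsUnionRight_cls (H X : FGraph) : clsUnionRight H (cls X) = cls (X.disjUnion H) := rfl

lemma clsUnionLeft_cls (G Y : FGraph) : clsUnionLeft G (cls Y) = cls (G.disjUnion Y) := rfl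

lemma map_cls_disjUnion_right {P Q : FGraph} (h : P.edgeDeck = Q.edgeDeck) (H : FGraph) :
    P.deckGraphs.map (fun X => cls (X.disjUnion H))
      = Q.deckGraphs.map (fun X => cls (X.disjUnion H)) := by
  have hP : P.deckGraphs.map (fun X => cls (X.disjUnion H))
      = P.edgeDeck.map (clsUnionRight H) := by
    rw [edgeDeck, Multiset.map_map]; rfl
  have hQ : Q.deckGraphs.map (fun X => cls (X.disjUnion H))
      = Q.edgeDeck.map (clsUnionRight H) := by
    rw [edgeDeck, Multiset.map_map]; rfl
  rw [hP, hQ, h]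

lemma map_cls_disjUnion_left (G Y : FGraph) :
    Y.deckGraphs.map (fun X => cls (G.disjUnion X)) = Y.edgeDeck.map (clsUnionLeft G) := by
  rw [edgeDeck, Multiset.map_map]; rfl

/-- total edge deck of a multiset of graphs -/
noncomputable def deckSum (M : Multiset FGraph) : Multiset GraphClass :=
  (M.map edgeDeck).sum

lemma deckSum_add (M N : Multiset FGraph) : deckSum (M + N) = deckSum M + deckSum N := by
  simp [deckSum]

lemma deckSum_map_disjUnion (P : FGraph) (M : Multiset FGraph) :
    deckSum (M.map (fun G => P.disjUnion G))
      = (M.map (fun G => P.edgeDeck.map (clsUnionRight G))).sum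
        + (deckSum M).map (clsUnionLeft P) := by
  rw [deckSum, Multiset.map_map]
  simp only [Function.comp]
  have : ∀ G : FGraph, edgeDeck (P.disjUnion G)
      = P.edgeDeck.map (clsUnionRight G) + G.edgeDeck.map (clsUnionLeft P) := by
    intro G
    rw [edgeDeck_disjUnion]
    congr 1
    · rw [edgeDeck, Multiset.map_map]; rfl
    · rw [edgeDeck, Multiset.map_map]; rfl
  rw [Multiset.map_congr rfl fun G _ => this G]
  rw [show (fun G => P.edgeDeck.map (clsUnionRight G) + G.edgeDeck.map (clsUnionLeft P))
      = fun G => P.edgeDeck.map (clsUnionRight G) + (edgeDeck G).map (clsUnionLeft P) from rfl]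
  rw [Multiset.sum_map_add]
  congr 1
  rw [deckSum]
  refine Multiset.induction_on M (by simp) fun G M ih => ?_
  simp [ih]

end FGraph
namespace FGraph

lemma deckSum_exchange {P Q : FGraph} (h : P.edgeDeck = Q.edgeDeck) {M M' : Multiset FGraph}
    (hMM : deckSum M = deckSum M') :
    deckSum (M.map (fun G => P.disjUnion G) + M'.map (fun G => Q.disjUnion G))
      = deckSum (M'.map (fun G => P.disjUnion G) + M.map (fun G => Q.disjUnion G)) := by
  rw [deckSum_add, deckSum_add, deckSum_map_disjUnion, deckSum_map_disjUnion,
    deckSum_map_disjUnion, deckSum_map_disjUnion, h, hMM]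
  abel

/-- quadruples (v,w₁,w₂,w₃) with each wᵢ adjacent to v; counting them gives `Σ_v deg(v)³`. -/
def nuType (G : FGraph) : Type := {p : G.V × G.V × G.V × G.V //
  G.graph.Adj p.1 p.2.1 ∧ G.graph.Adj p.1 p.2.2.1 ∧ G.graph.Adj p.1 p.2.2.2}

instance (G : FGraph) : Finite (nuType G) := by unfold nuType; infer_instance

noncomputable def nu (G : FGraph) : ℕ := Nat.card (nuType G)

lemma nu_congr {G H : FGraph} (h : G ≈ H) : nu G = nu H := by
  obtain ⟨e⟩ := h
  exact Nat.card_congr <| Equiv.subtypeEquiv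
    (e.toEquiv.prodCongr (e.toEquiv.prodCongr (e.toEquiv.prodCongr e.toEquiv)))
    (fun p => by simp [e.map_adj_iff])

def nuSumMap (G H : FGraph) (x : nuType G ⊕ nuType H) : nuType (G.disjUnion H) :=
  match x with
  | Sum.inl p => ⟨(Sum.inl p.1.1, Sum.inl p.1.2.1, Sum.inl p.1.2.2.1, Sum.inl p.1.2.2.2),
      p.2.1, p.2.2.1, p.2.2.2⟩
  | Sum.inr p => ⟨(Sum.inr p.1.1, Sum.inr p.1.2.1, Sum.inr p.1.2.2.1, Sum.inr p.1.2.2.2),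
      p.2.1, p.2.2.1, p.2.2.2⟩

lemma nuSumMap_bijective (G H : FGraph) : Function.Bijective (nuSumMap G H) := by
  constructor
  · rintro (⟨⟨a, b, c, d⟩, ha⟩ | ⟨⟨a, b, c, d⟩, ha⟩)
      (⟨⟨a', b', c', d'⟩, ha'⟩ | ⟨⟨a', b', c', d'⟩, ha'⟩) h <;>
    · have h' := congrArg Subtype.val h
      simp only [nuSumMap, Prod.mk.injEq, Sum.inl.injEq, Sum.inr.injEq,
        reduceCtorEq, false_and, and_false] at h' <;>
      · obtain ⟨h1, h2, h3, h4⟩ := h'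
        cases h1; cases h2; cases h3; cases h4; rfl
  · rintro ⟨⟨v, w1, w2, w3⟩, h1, h2, h3⟩
    cases v <;> cases w1 <;> cases w2 <;> cases w3 <;>
      simp only [FGraph.disjUnion, SimpleGraph.sum_adj] at h1 h2 h3 <;>
      first
      | exact ⟨Sum.inl ⟨(_, _, _, _), h1, h2, h3⟩, rfl⟩
      | exact ⟨Sum.inr ⟨(_, _, _, _), h1, h2, h3⟩, rfl⟩

lemma nu_disjUnion (G H : FGraph) : nu (G.disjUnion H) = nu G + nu H := by
  rw [nu, ← Nat.card_congr (Equiv.ofBijective _ (nuSumMap_bijective G H)), Nat.card_sum]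
  rfl

end FGraph
namespace FGraph

/-- canonical one-edge graph on 4 vertices -/
def oneEdge : FGraph := { V := Fin 4, graph := SimpleGraph.fromEdgeSet {s(0, 1)} }

attribute [reducible] oneEdge


instance : DecidableEq twoK2.V := inferInstanceAs (DecidableEq (Fin 4))
instance : DecidableEq p3K1.V := inferInstanceAs (DecidableEq (Fin 4))
instance : DecidableEq k3K1.V := inferInstanceAs (DecidableEq (Fin 4))
instance : DecidableEq k13.V := inferInstanceAs (DecidableEq (Fin 4))
instance : DecidableEq oneEdge.V := inferInstanceAs (DecidableEq (Fin 4))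

lemma cls_eq_of_iso (G H : FGraph) (e : G.V ≃ H.V)
    (h : ∀ a b, G.graph.Adj a b ↔ H.graph.Adj (e a) (e b)) : cls G = cls H :=
  Quotient.sound ⟨⟨e, fun {a b} => (h a b).symm⟩⟩

lemma edgeDeck_replicate (G : FGraph) (c : GraphClass)
    (h : ∀ e ∈ G.graph.edgeSet, cls (G.deleteEdge e) = c) :
    G.edgeDeck = Multiset.replicate G.edgeCount c := by
  rw [edgeDeck, deckGraphs_eq, Multiset.map_map, Multiset.eq_replicate]
  constructor
  · rw [Multiset.card_map, edgeCount_eq_card]; rfl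
  · intro b hb
    obtain ⟨e, he, rfl⟩ := Multiset.mem_map.mp hb
    exact h e (mem_edgeFinset.mp he)

lemma twoK2_edgeSet : twoK2.graph.edgeSet = ((↑({s(0, 1), s(2, 3)} : Finset (Sym2 (Fin 4)))) : Set (Sym2 (Fin 4))) := by
  show (SimpleGraph.fromEdgeSet _).edgeSet = _
  rw [SimpleGraph.edgeSet_fromEdgeSet]
  ext e
  simp only [Set.mem_diff, Set.mem_insert_iff, Set.mem_singleton_iff, Set.mem_setOf_eq,
    Finset.coe_insert, Finset.coe_singleton]
  constructor
  · rintro ⟨h, -⟩; exact h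
  · rintro (rfl | rfl) <;> exact ⟨by simp, by decide⟩

lemma p3K1_edgeSet : p3K1.graph.edgeSet = ((↑({s(0, 1), s(1, 2)} : Finset (Sym2 (Fin 4)))) : Set (Sym2 (Fin 4))) := by
  show (SimpleGraph.fromEdgeSet _).edgeSet = _
  rw [SimpleGraph.edgeSet_fromEdgeSet]
  ext e
  simp only [Set.mem_diff, Set.mem_insert_iff, Set.mem_singleton_iff, Set.mem_setOf_eq,
    Finset.coe_insert, Finset.coe_singleton]
  constructor
  · rintro ⟨h, -⟩; exact h
  · rintro (rfl | rfl) <;> exact ⟨by simp, by decide⟩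

lemma k3K1_edgeSet :
    k3K1.graph.edgeSet = ((↑({s(0, 1), s(1, 2), s(0, 2)} : Finset (Sym2 (Fin 4)))) : Set (Sym2 (Fin 4))) := by
  show (SimpleGraph.fromEdgeSet _).edgeSet = _
  rw [SimpleGraph.edgeSet_fromEdgeSet]
  ext e
  simp only [Set.mem_diff, Set.mem_insert_iff, Set.mem_singleton_iff, Set.mem_setOf_eq,
    Finset.coe_insert, Finset.coe_singleton]
  constructor
  · rintro ⟨h, -⟩; exact h
  · rintro (rfl | rfl | rfl) <;> exact ⟨by simp, by decide⟩

lemma k13_edgeSet :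
    k13.graph.edgeSet = ((↑({s(0, 1), s(0, 2), s(0, 3)} : Finset (Sym2 (Fin 4)))) : Set (Sym2 (Fin 4))) := by
  show (SimpleGraph.fromEdgeSet _).edgeSet = _
  rw [SimpleGraph.edgeSet_fromEdgeSet]
  ext e
  simp only [Set.mem_diff, Set.mem_insert_iff, Set.mem_singleton_iff, Set.mem_setOf_eq,
    Finset.coe_insert, Finset.coe_singleton]
  constructor
  · rintro ⟨h, -⟩; exact h
  · rintro (rfl | rfl | rfl) <;> exact ⟨by simp, by decide⟩

lemma twoK2_edgeCount : twoK2.edgeCount = 2 := by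
  rw [edgeCount, twoK2_edgeSet, Set.ncard_coe_finset]; decide

lemma p3K1_edgeCount : p3K1.edgeCount = 2 := by
  rw [edgeCount, p3K1_edgeSet, Set.ncard_coe_finset]; decide

lemma k3K1_edgeCount : k3K1.edgeCount = 3 := by
  rw [edgeCount, k3K1_edgeSet, Set.ncard_coe_finset]; decide

lemma k13_edgeCount : k13.edgeCount = 3 := by
  rw [edgeCount, k13_edgeSet, Set.ncard_coe_finset]; decide

end FGraph
namespace FGraph

instance (G : FGraph) (e : Sym2 G.V) [h : DecidableEq G.V] : DecidableEq (G.deleteEdge e).V := h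
instance instFtTwoK2 : Fintype twoK2.V := inferInstanceAs (Fintype (Fin 4))
instance instFtP3K1 : Fintype p3K1.V := inferInstanceAs (Fintype (Fin 4))
instance instFtK3K1 : Fintype k3K1.V := inferInstanceAs (Fintype (Fin 4))
instance instFtK13 : Fintype k13.V := inferInstanceAs (Fintype (Fin 4))
instance instFtOneEdge : Fintype oneEdge.V := inferInstanceAs (Fintype (Fin 4))
instance (G : FGraph) (e : Sym2 G.V) [h : Fintype G.V] : Fintype (G.deleteEdge e).V := h


instance (n : ℕ) : OfNat twoK2.V n := inferInstanceAs (OfNat (Fin 4) n)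
instance (n : ℕ) : OfNat p3K1.V n := inferInstanceAs (OfNat (Fin 4) n)
instance (n : ℕ) : OfNat k3K1.V n := inferInstanceAs (OfNat (Fin 4) n)
instance (n : ℕ) : OfNat k13.V n := inferInstanceAs (OfNat (Fin 4) n)
instance (n : ℕ) : OfNat oneEdge.V n := inferInstanceAs (OfNat (Fin 4) n)

lemma cls_del_twoK2_a : cls (twoK2.deleteEdge s(0, 1)) = cls oneEdge :=
  cls_eq_of_iso _ _
    (show twoK2.V ≃ oneEdge.V from ⟨![2, 3, 0, 1], ![2, 3, 0, 1], by decide, by decide⟩)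
    (by
      simp only [FGraph.deleteEdge, twoK2, oneEdge, SimpleGraph.deleteEdges_adj,
        SimpleGraph.fromEdgeSet_adj, Set.mem_insert_iff, Set.mem_singleton_iff]
      decide)

lemma cls_del_twoK2_b : cls (twoK2.deleteEdge s(2, 3)) = cls oneEdge :=
  cls_eq_of_iso _ _
    (show twoK2.V ≃ oneEdge.V from ⟨![0, 1, 2, 3], ![0, 1, 2, 3], by decide, by decide⟩)
    (by
      simp only [FGraph.deleteEdge, twoK2, oneEdge, SimpleGraph.deleteEdges_adj,
        SimpleGraph.fromEdgeSet_adj, Set.mem_insert_iff, Set.mem_singleton_iff]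
      decide)

lemma cls_del_p3K1_a : cls (p3K1.deleteEdge s(0, 1)) = cls oneEdge :=
  cls_eq_of_iso _ _
    (show p3K1.V ≃ oneEdge.V from ⟨![2, 0, 1, 3], ![1, 2, 0, 3], by decide, by decide⟩)
    (by
      simp only [FGraph.deleteEdge, p3K1, oneEdge, SimpleGraph.deleteEdges_adj,
        SimpleGraph.fromEdgeSet_adj, Set.mem_insert_iff, Set.mem_singleton_iff]
      decide)

lemma cls_del_p3K1_b : cls (p3K1.deleteEdge s(1, 2)) = cls oneEdge :=
  cls_eq_of_iso _ _
    (show p3K1.V ≃ oneEdge.V from ⟨![0, 1, 2, 3], ![0, 1, 2, 3], by decide, by decide⟩)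
    (by
      simp only [FGraph.deleteEdge, p3K1, oneEdge, SimpleGraph.deleteEdges_adj,
        SimpleGraph.fromEdgeSet_adj, Set.mem_insert_iff, Set.mem_singleton_iff]
      decide)

lemma cls_del_k3K1_a : cls (k3K1.deleteEdge s(0, 1)) = cls p3K1 :=
  cls_eq_of_iso _ _
    (show k3K1.V ≃ p3K1.V from ⟨![2, 0, 1, 3], ![1, 2, 0, 3], by decide, by decide⟩)
    (by
      simp only [FGraph.deleteEdge, k3K1, p3K1, SimpleGraph.deleteEdges_adj,
        SimpleGraph.fromEdgeSet_adj, Set.mem_insert_iff, Set.mem_singleton_iff]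
      decide)

lemma cls_del_k3K1_b : cls (k3K1.deleteEdge s(1, 2)) = cls p3K1 :=
  cls_eq_of_iso _ _
    (show k3K1.V ≃ p3K1.V from ⟨![1, 0, 2, 3], ![1, 0, 2, 3], by decide, by decide⟩)
    (by
      simp only [FGraph.deleteEdge, k3K1, p3K1, SimpleGraph.deleteEdges_adj,
        SimpleGraph.fromEdgeSet_adj, Set.mem_insert_iff, Set.mem_singleton_iff]
      decide)

lemma cls_del_k3K1_c : cls (k3K1.deleteEdge s(0, 2)) = cls p3K1 :=
  cls_eq_of_iso _ _
    (show k3K1.V ≃ p3K1.V from ⟨![0, 1, 2, 3], ![0, 1, 2, 3], by decide, by decide⟩)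
    (by
      simp only [FGraph.deleteEdge, k3K1, p3K1, SimpleGraph.deleteEdges_adj,
        SimpleGraph.fromEdgeSet_adj, Set.mem_insert_iff, Set.mem_singleton_iff]
      decide)

lemma cls_del_k13_a : cls (k13.deleteEdge s(0, 1)) = cls p3K1 :=
  cls_eq_of_iso _ _
    (show k13.V ≃ p3K1.V from ⟨![1, 3, 0, 2], ![2, 0, 3, 1], by decide, by decide⟩)
    (by
      simp only [FGraph.deleteEdge, k13, p3K1, SimpleGraph.deleteEdges_adj,
        SimpleGraph.fromEdgeSet_adj, Set.mem_insert_iff, Set.mem_singleton_iff]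
      decide)

lemma cls_del_k13_b : cls (k13.deleteEdge s(0, 2)) = cls p3K1 :=
  cls_eq_of_iso _ _
    (show k13.V ≃ p3K1.V from ⟨![1, 0, 3, 2], ![1, 0, 3, 2], by decide, by decide⟩)
    (by
      simp only [FGraph.deleteEdge, k13, p3K1, SimpleGraph.deleteEdges_adj,
        SimpleGraph.fromEdgeSet_adj, Set.mem_insert_iff, Set.mem_singleton_iff]
      decide)

lemma cls_del_k13_c : cls (k13.deleteEdge s(0, 3)) = cls p3K1 :=
  cls_eq_of_iso _ _
    (show k13.V ≃ p3K1.V from ⟨![1, 0, 2, 3], ![1, 0, 2, 3], by decide, by decide⟩)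
    (by
      simp only [FGraph.deleteEdge, k13, p3K1, SimpleGraph.deleteEdges_adj,
        SimpleGraph.fromEdgeSet_adj, Set.mem_insert_iff, Set.mem_singleton_iff]
      decide)

lemma edgeDeck_twoK2 : twoK2.edgeDeck = Multiset.replicate 2 (cls oneEdge) := by
  rw [← twoK2_edgeCount]
  apply edgeDeck_replicate
  intro e he
  rw [twoK2_edgeSet] at he
  rcases Finset.mem_insert.mp he with rfl | he
  · exact cls_del_twoK2_a
  · rw [Finset.mem_singleton.mp he]
    exact cls_del_twoK2_b

lemma edgeDeck_p3K1 : p3K1.edgeDeck = Multiset.replicate 2 (cls oneEdge) := by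
  rw [← p3K1_edgeCount]
  apply edgeDeck_replicate
  intro e he
  rw [p3K1_edgeSet] at he
  rcases Finset.mem_insert.mp he with rfl | he
  · exact cls_del_p3K1_a
  · rw [Finset.mem_singleton.mp he]
    exact cls_del_p3K1_b

lemma edgeDeck_k3K1 : k3K1.edgeDeck = Multiset.replicate 3 (cls p3K1) := by
  rw [← k3K1_edgeCount]
  apply edgeDeck_replicate
  intro e he
  rw [k3K1_edgeSet] at he
  rcases Finset.mem_insert.mp he with rfl | he
  · exact cls_del_k3K1_a
  rcases Finset.mem_insert.mp he with rfl | he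
  · exact cls_del_k3K1_b
  · rw [Finset.mem_singleton.mp he]
    exact cls_del_k3K1_c

lemma edgeDeck_k13 : k13.edgeDeck = Multiset.replicate 3 (cls p3K1) := by
  rw [← k13_edgeCount]
  apply edgeDeck_replicate
  intro e he
  rw [k13_edgeSet] at he
  rcases Finset.mem_insert.mp he with rfl | he
  · exact cls_del_k13_a
  rcases Finset.mem_insert.mp he with rfl | he
  · exact cls_del_k13_b
  · rw [Finset.mem_singleton.mp he]
    exact cls_del_k13_c

lemma edgeDeck_pair2 : p3K1.edgeDeck = twoK2.edgeDeck := by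
  rw [edgeDeck_twoK2, edgeDeck_p3K1]

lemma edgeDeck_pair3 : k13.edgeDeck = k3K1.edgeDeck := by
  rw [edgeDeck_k13, edgeDeck_k3K1]

end FGraph
namespace FGraph

instance : DecidableRel twoK2.graph.Adj := fun a b =>
  decidable_of_iff ((s(a, b) = s(0, 1) ∨ s(a, b) = s(2, 3)) ∧ a ≠ b)
    (by simp [twoK2, SimpleGraph.fromEdgeSet_adj, Set.mem_insert_iff])

instance : DecidableRel p3K1.graph.Adj := fun a b =>
  decidable_of_iff ((s(a, b) = s(0, 1) ∨ s(a, b) = s(1, 2)) ∧ a ≠ b)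
    (by simp [p3K1, SimpleGraph.fromEdgeSet_adj, Set.mem_insert_iff])

instance : DecidableRel k3K1.graph.Adj := fun a b =>
  decidable_of_iff ((s(a, b) = s(0, 1) ∨ s(a, b) = s(1, 2) ∨ s(a, b) = s(0, 2)) ∧ a ≠ b)
    (by simp [k3K1, SimpleGraph.fromEdgeSet_adj, Set.mem_insert_iff])

instance : DecidableRel k13.graph.Adj := fun a b =>
  decidable_of_iff ((s(a, b) = s(0, 1) ∨ s(a, b) = s(0, 2) ∨ s(a, b) = s(0, 3)) ∧ a ≠ b)
    (by simp [k13, SimpleGraph.fromEdgeSet_adj, Set.mem_insert_iff])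

instance instFintypeNuType (G : FGraph) [Fintype G.V] [DecidableEq G.V]
    [DecidableRel G.graph.Adj] : Fintype (nuType G) :=
  inferInstanceAs (Fintype {p : G.V × G.V × G.V × G.V //
    G.graph.Adj p.1 p.2.1 ∧ G.graph.Adj p.1 p.2.2.1 ∧ G.graph.Adj p.1 p.2.2.2})

lemma nu_twoK2_lt : nu twoK2 < nu p3K1 := by
  rw [nu, nu, Nat.card_eq_fintype_card, Nat.card_eq_fintype_card]
  decide

lemma nu_k3K1_lt : nu k3K1 < nu k13 := by
  rw [nu, nu, Nat.card_eq_fintype_card, Nat.card_eq_fintype_card]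
  decide

end FGraph
namespace FGraph

/-- the two halves of the expansion of `∏ (Pᵢ - Qᵢ)` over a nonempty list of pairs -/
noncomputable def MM : FGraph × FGraph → List (FGraph × FGraph) → Multiset FGraph × Multiset FGraph
  | pq, [] => ({pq.1}, {pq.2})
  | pq, pq' :: l =>
      ((MM pq' l).1.map (fun G => pq.1.disjUnion G) + (MM pq' l).2.map (fun G => pq.2.disjUnion G),
       (MM pq' l).2.map (fun G => pq.1.disjUnion G) + (MM pq' l).1.map (fun G => pq.2.disjUnion G))

/-- the all-`P` piece -/
def topG : FGraph × FGraph → List (FGraph × FGraph) → FGraph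
  | pq, [] => pq.1
  | pq, pq' :: l => pq.1.disjUnion (topG pq' l)

def goodPair (pq : FGraph × FGraph) : Prop :=
  pq.1.edgeDeck = pq.2.edgeDeck ∧ nu pq.2 < nu pq.1 ∧ pq.2.edgeCount = pq.1.edgeCount

lemma MM_card (pq : FGraph × FGraph) (l : List (FGraph × FGraph)) :
    Multiset.card (MM pq l).1 = 2 ^ l.length ∧ Multiset.card (MM pq l).2 = 2 ^ l.length := by
  induction l generalizing pq with
  | nil => simp [MM]
  | cons pq' l ih =>
    obtain ⟨h1, h2⟩ := ih pq'
    constructor <;> simp [MM, h1, h2, List.length_cons, pow_succ] <;> omega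

lemma MM_edgeCount (pq : FGraph × FGraph) (l : List (FGraph × FGraph))
    (hg : ∀ x ∈ pq :: l, goodPair x) :
    ∀ G, (G ∈ (MM pq l).1 ∨ G ∈ (MM pq l).2) →
      G.edgeCount = pq.1.edgeCount + (l.map (fun x => x.1.edgeCount)).sum := by
  induction l generalizing pq with
  | nil =>
    intro G hG
    rcases hG with hG | hG
    · rw [Multiset.mem_singleton.mp hG]; simp
    · rw [Multiset.mem_singleton.mp hG]; simp [(hg pq (by simp)).2.2]
  | cons pq' l ih =>
    intro G hG
    have hq : pq.2.edgeCount = pq.1.edgeCount := (hg pq (by simp)).2.2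
    have ih' := ih pq' (fun x hx => hg x (List.mem_cons_of_mem pq hx))
    have key : ∀ X G', (X = pq.1 ∨ X = pq.2) →
        (G' ∈ (MM pq' l).1 ∨ G' ∈ (MM pq' l).2) →
        (X.disjUnion G').edgeCount
          = pq.1.edgeCount + ((pq' :: l).map (fun x => x.1.edgeCount)).sum := by
      rintro X G' hX hG'
      rw [edgeCount_disjUnion, ih' G' hG', List.map_cons, List.sum_cons]
      rcases hX with rfl | rfl
      · ring
      · rw [hq]
    simp only [MM, Multiset.mem_add, Multiset.mem_map] at hG
    rcases hG with (⟨G', hG', rfl⟩ | ⟨G', hG', rfl⟩) | (⟨G', hG', rfl⟩ | ⟨G', hG', rfl⟩)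
    · exact key _ _ (Or.inl rfl) (Or.inl hG')
    · exact key _ _ (Or.inr rfl) (Or.inr hG')
    · exact key _ _ (Or.inl rfl) (Or.inr hG')
    · exact key _ _ (Or.inr rfl) (Or.inl hG')

lemma MM_deckSum (pq : FGraph × FGraph) (l : List (FGraph × FGraph))
    (hg : ∀ x ∈ pq :: l, goodPair x) :
    deckSum (MM pq l).1 = deckSum (MM pq l).2 := by
  induction l generalizing pq with
  | nil => simp [MM, deckSum, (hg pq (by simp)).1]
  | cons pq' l ih =>
    have ih' := ih pq' (fun x hx => hg x (List.mem_cons_of_mem pq hx))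
    exact deckSum_exchange (hg pq (by simp)).1 ih'

lemma MM_top_mem (pq : FGraph × FGraph) (l : List (FGraph × FGraph)) :
    topG pq l ∈ (MM pq l).1 := by
  induction l generalizing pq with
  | nil => simp [MM, topG]
  | cons pq' l ih =>
    simp only [MM, topG, Multiset.mem_add]
    exact Or.inl (Multiset.mem_map_of_mem _ (ih pq'))

lemma MM_nu (pq : FGraph × FGraph) (l : List (FGraph × FGraph))
    (hg : ∀ x ∈ pq :: l, goodPair x) :
    (∀ G ∈ (MM pq l).1, nu G ≤ nu (topG pq l)) ∧
    (∀ G ∈ (MM pq l).2, nu G < nu (topG pq l)) := by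
  induction l generalizing pq with
  | nil =>
    constructor <;> intro G hG <;> rw [Multiset.mem_singleton.mp hG]
    · exact le_refl _
    · exact (hg pq (by simp)).2.1
  | cons pq' l ih =>
    have hq : nu pq.2 < nu pq.1 := (hg pq (by simp)).2.1
    obtain ⟨ih1, ih2⟩ := ih pq' (fun x hx => hg x (List.mem_cons_of_mem pq hx))
    constructor <;> intro G hG <;>
      simp only [MM, topG, Multiset.mem_add, Multiset.mem_map] at hG ⊢ <;>
      rcases hG with ⟨G', hG', rfl⟩ | ⟨G', hG', rfl⟩ <;> rw [nu_disjUnion, nu_disjUnion]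
    · exact Nat.add_le_add (le_refl _) (ih1 G' hG')
    · exact le_of_lt (Nat.add_lt_add hq (ih2 G' hG'))
    · exact Nat.add_lt_add_left (ih2 G' hG') _
    · exact Nat.add_lt_add_of_lt_of_le hq (ih1 G' hG')

lemma MM_ne (pq : FGraph × FGraph) (l : List (FGraph × FGraph))
    (hg : ∀ x ∈ pq :: l, goodPair x) :
    (MM pq l).1.map cls ≠ (MM pq l).2.map cls := by
  intro h
  have hmem : cls (topG pq l) ∈ (MM pq l).2.map cls := by
    rw [← h]
    exact Multiset.mem_map_of_mem _ (MM_top_mem pq l)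
  obtain ⟨G, hG, hc⟩ := Multiset.mem_map.mp hmem
  have : nu G = nu (topG pq l) := nu_congr (Quotient.exact hc)
  exact absurd ((MM_nu pq l hg).2 G hG) (by omega)

lemma gerFails_of_list (pq : FGraph × FGraph) (l : List (FGraph × FGraph))
    (hg : ∀ x ∈ pq :: l, goodPair x) (n : ℕ)
    (hn : pq.1.edgeCount + (l.map (fun x => x.1.edgeCount)).sum = n) :
    GERFails n (2 ^ l.length) := by
  refine ⟨(MM pq l).1, (MM pq l).2, (MM_card pq l).1, (MM_card pq l).2, ?_, ?_,
    MM_ne pq l hg, MM_deckSum pq l hg⟩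
  · intro G hG; rw [MM_edgeCount pq l hg G (Or.inl hG)]; exact hn
  · intro G hG; rw [MM_edgeCount pq l hg G (Or.inr hG)]; exact hn

end FGraph
namespace FGraph

noncomputable def pair2 : FGraph × FGraph := (p3K1, twoK2)
noncomputable def pair3 : FGraph × FGraph := (k13, k3K1)

lemma good_pair2 : goodPair pair2 :=
  ⟨edgeDeck_pair2, nu_twoK2_lt, by rw [pair2]; rw [twoK2_edgeCount, p3K1_edgeCount]⟩

lemma good_pair3 : goodPair pair3 :=
  ⟨edgeDeck_pair3, nu_k3K1_lt, by rw [pair3]; rw [k3K1_edgeCount, k13_edgeCount]⟩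

lemma sum_rep3 (k : ℕ) :
    ((List.replicate k pair3).map (fun x => x.1.edgeCount)).sum = 3 * k := by
  rw [List.map_replicate, List.sum_replicate, smul_eq_mul]
  rw [show pair3.1.edgeCount = 3 from k13_edgeCount]
  omega

lemma good_of_mem {pq : FGraph × FGraph} {k : ℕ}
    (hpq : goodPair pq) : ∀ x ∈ pq :: List.replicate k pair3, goodPair x := by
  intro x hx
  rcases List.mem_cons.mp hx with rfl | hx
  · exact hpq
  · rw [List.eq_of_mem_replicate hx]; exact good_pair3

end FGraph

theorem kmin_le_two_pow' (n : ℕ) (hn : 2 ≤ n) : kmin n ≤ 2 ^ (n / 3) := by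
  classical
  have hmod := Nat.div_add_mod n 3
  have hcase : n % 3 = 0 ∨ n % 3 = 1 ∨ n % 3 = 2 := by omega
  have key : ∃ k, k ≤ 2 ^ (n / 3) ∧ 1 ≤ k ∧ GERFails n k := by
    rcases hcase with h | h | h
    · -- n = 3 * (n/3), n/3 ≥ 1
      have hm : 1 ≤ n / 3 := by omega
      refine ⟨2 ^ (n / 3 - 1), Nat.pow_le_pow_right (by norm_num) (by omega), Nat.one_le_two_pow, ?_⟩
      have := FGraph.gerFails_of_list FGraph.pair3 (List.replicate (n / 3 - 1) FGraph.pair3)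
        (FGraph.good_of_mem FGraph.good_pair3) n ?_
      · simpa [List.length_replicate] using this
      · rw [FGraph.sum_rep3, show FGraph.pair3.1.edgeCount = 3 from FGraph.k13_edgeCount]
        omega
    · have hm : 1 ≤ n / 3 := by omega
      refine ⟨2 ^ (n / 3), le_refl _, Nat.one_le_two_pow, ?_⟩
      have := FGraph.gerFails_of_list FGraph.pair2
        (FGraph.pair2 :: List.replicate (n / 3 - 1) FGraph.pair3)
        ?_ n ?_
      · simpa [List.length_replicate, show n/3 - 1 + 1 = n/3 by omega] using this
      · intro x hx
        rcases List.mem_cons.mp hx with rfl | hx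
        · exact FGraph.good_pair2
        · exact FGraph.good_of_mem FGraph.good_pair2 x hx
      · rw [List.map_cons, List.sum_cons, FGraph.sum_rep3,
          show FGraph.pair2.1.edgeCount = 2 from FGraph.p3K1_edgeCount]
        omega
    · refine ⟨2 ^ (n / 3), le_refl _, Nat.one_le_two_pow, ?_⟩
      have := FGraph.gerFails_of_list FGraph.pair2 (List.replicate (n / 3) FGraph.pair3)
        (FGraph.good_of_mem FGraph.good_pair2) n ?_
      · simpa [List.length_replicate] using this
      · rw [FGraph.sum_rep3, show FGraph.pair2.1.edgeCount = 2 from FGraph.p3K1_edgeCount]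
        omega
  obtain ⟨k, hk, h1, h2⟩ := key
  exact le_trans (Nat.sInf_le ⟨h1, h2⟩) hk

/-- for `n ≥ 2` the minimal counterexample size for generalized edge
reconstruction satisfies `k_n ≤ 2 ^ ⌊n/3⌋`. -/
theorem kmin_le_two_pow (n : ℕ) (hn : 2 ≤ n) : kmin n ≤ 2 ^ (n / 3) := by
  exact kmin_le_two_pow' n hn
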